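/- arXiv:2204.00589 — 3 statements merged into one kernel-verified Lean document; each statement's English description precedes it below -/
import Mathlib

section
/- Let p > 1. For every ε ∈ [0,1] and every U ∈ ℝ, |f_ε'(U) - f_0'(U)| ≤ ε |U|^{p-1} ( p ln(ln(e+|U|)) + 1/ln(e+|U|) ), where f_ε'(U) = (|U|^{p-1}/(ln(e+|U|))^ε)(p - ε|U|/((e+|U|)ln(e+|U|))) and f_0'(U) = p|U|^{p-1}. -/
open Real

theorem stmt_4 (p : ℝ) (hp : 1 < p) (ε : ℝ) (hε0 : 0 ≤ ε) (hε1 : ε ≤ 1) (U : ℝ) :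
    |(|U| ^ (p - 1) / (Real.log (Real.exp 1 + |U|)) ^ ε) *
        (p - ε * |U| / ((Real.exp 1 + |U|) * Real.log (Real.exp 1 + |U|))) -
      p * |U| ^ (p - 1)| ≤
    ε * |U| ^ (p - 1) *
      (p * Real.log (Real.log (Real.exp 1 + |U|)) + 1 / Real.log (Real.exp 1 + |U|)) := by
  set L := Real.log (Real.exp 1 + |U|) with hLdef
  have habs : (0:ℝ) ≤ |U| := abs_nonneg U
  have he : Real.exp 1 ≤ Real.exp 1 + |U| := by linarith
  have hepos : (0:ℝ) < Real.exp 1 + |U| := lt_of_lt_of_le (Real.exp_pos 1) he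
  have hL1 : 1 ≤ L := by
    rw [hLdef]
    calc (1:ℝ) = Real.log (Real.exp 1) := (Real.log_exp 1).symm
    _ ≤ _ := Real.log_le_log (Real.exp_pos 1) he
  have hL0 : 0 < L := lt_of_lt_of_le one_pos hL1
  have hlogL : 0 ≤ Real.log L := Real.log_nonneg hL1
  set a := |U| ^ (p - 1) with hadef
  have ha : 0 ≤ a := Real.rpow_nonneg habs _
  set t := L ^ ε with htdef
  have ht1 : 1 ≤ t := Real.one_le_rpow hL1 hε0
  have ht0 : 0 < t := lt_of_lt_of_le one_pos ht1
  set B := ε * |U| / ((Real.exp 1 + |U|) * L) with hBdef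
  have hB0 : 0 ≤ B := by
    apply div_nonneg (mul_nonneg hε0 habs)
    positivity
  have hBle : B ≤ ε / L := by
    rw [hBdef]
    rw [div_le_div_iff₀ (by positivity) hL0]
    have h1 : |U| ≤ Real.exp 1 + |U| := by linarith [Real.exp_pos 1]
    calc ε * |U| * L ≤ ε * (Real.exp 1 + |U|) * L := by
          apply mul_le_mul_of_nonneg_right _ hL0.le
          exact mul_le_mul_of_nonneg_left h1 hε0
    _ = ε * ((Real.exp 1 + |U|) * L) := by ring
  have hB1 : B ≤ 1 := le_trans hBle (by
    rw [div_le_one hL0]; linarith)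
  -- key inequality: 1 - 1/t ≤ ε * log L
  have hkey : 1 - 1/t ≤ ε * Real.log L := by
    have h1 : Real.exp (-(ε * Real.log L)) = 1 / t := by
      rw [htdef, Real.rpow_def_of_pos hL0, one_div, ← Real.exp_neg]
      ring_nf
    have h2 : 1 - (ε * Real.log L) ≤ Real.exp (-(ε * Real.log L)) := by
      have := Real.add_one_le_exp (-(ε * Real.log L))
      linarith
    rw [h1] at h2; linarith
  set s := 1/t with hsdef
  have hs0 : 0 < s := by positivity
  have hs1 : s ≤ 1 := by rw [hsdef]; exact div_le_one_of_le₀ ht1 ht0.le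
  have hexpr : a / t * (p - B) - p * a = -(a * (p * (1 - s) + s * B)) := by
    rw [hsdef]; field_simp; ring
  rw [hexpr, abs_neg, abs_of_nonneg]
  · have h3 : a * (p * (1 - s)) ≤ a * (p * (ε * Real.log L)) := by
      apply mul_le_mul_of_nonneg_left _ ha
      exact mul_le_mul_of_nonneg_left hkey (by linarith)
    have h4 : a * (s * B) ≤ a * (ε / L) := by
      apply mul_le_mul_of_nonneg_left _ ha
      calc s * B ≤ 1 * B := mul_le_mul_of_nonneg_right hs1 hB0
      _ = B := one_mul B
      _ ≤ ε / L := hBle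
    have : ε * a * (p * Real.log L + 1 / L) = a * (p * (ε * Real.log L)) + a * (ε / L) := by
      ring
    rw [this]
    nlinarith [h3, h4]
  · have : 0 ≤ 1 - s := by linarith
    have hpB : 0 ≤ p - B := by linarith
    positivity
end

section
/- Let p > 2 and f_ε(U) = |U|^{p-1}U/(ln(e+|U|))^ε. There exist c > 0 and ε₀ > 0 such that for all ε ∈ [0, ε₀] and all U ∈ ℝ, the second derivative satisfies |f_ε''(U)| ≤ c|U|^{p-2}. -/
open Real

theorem stmt_6 (p : ℝ) (hp : 2 < p) :
    ∃ c > 0, ∃ ε₀ > 0, ∀ ε ∈ Set.Icc (0 : ℝ) ε₀, ∀ U : ℝ,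
      |(ε * |U| ^ (p - 2) * U / (Real.log (Real.exp 1 + |U|)) ^ ε) *
          ((|U| - Real.exp 1 * Real.log (Real.exp 1 + |U|)) /
            ((Real.exp 1 + |U|) ^ 2 * (Real.log (Real.exp 1 + |U|)) ^ 2)) +
        (|U| ^ (p - 3) * U / (Real.log (Real.exp 1 + |U|)) ^ ε) *
          (p - 1 - ε * |U| / ((Real.exp 1 + |U|) * Real.log (Real.exp 1 + |U|))) *
          (p - ε * |U| / ((Real.exp 1 + |U|) * Real.log (Real.exp 1 + |U|)))| ≤
      c * |U| ^ (p - 2) := by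
  refine ⟨(1 + Real.exp 1) + p * (p - 1), by nlinarith [Real.exp_pos 1], 1, one_pos, ?_⟩
  rintro ε ⟨hε0, hε1⟩ U
  rcases eq_or_ne U 0 with rfl | hU
  · have h2 : (0:ℝ) < p - 2 := by linarith
    have : ((0:ℝ)) ^ (p - 2) = 0 := Real.zero_rpow (by linarith)
    simp [this]
  · have ha : 0 < |U| := abs_pos.mpr hU
    set a := |U| with ha_def
    set A := Real.exp 1 + a with hA_def
    have hA : 0 < A := by positivity
    set L := Real.log A with hL_def
    have hL : 1 ≤ L := by
      rw [hL_def, Real.le_log_iff_exp_le hA]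
      have := abs_nonneg U
      linarith
    have hLpos : 0 < L := by linarith
    set Lε := L ^ ε with hLε_def
    have hLε : 1 ≤ Lε := Real.one_le_rpow hL hε0
    have hLεpos : 0 < Lε := by linarith
    have haA : a ≤ A := by
      have := Real.exp_pos 1; linarith
    have hP : (0:ℝ) ≤ a ^ (p - 2) := Real.rpow_nonneg ha.le _
    have hP3 : (0:ℝ) ≤ a ^ (p - 3) := Real.rpow_nonneg ha.le _
    have hLA : L ≤ A := Real.log_le_self hA.le
    have hp3 : a ^ (p - 2) = a ^ (p - 3) * a := by
      rw [show p - 2 = (p - 3) + 1 by ring, Real.rpow_add_one ha.ne']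
    set t := ε * a / (A * L) with ht_def
    have ht0 : 0 ≤ t := by positivity
    have ht1 : t ≤ 1 := by
      rw [ht_def, div_le_one (by positivity)]
      nlinarith [mul_le_mul_of_nonneg_right hε1 ha.le]
    -- bound for first term
    have h1 : |a - Real.exp 1 * L| ≤ (1 + Real.exp 1) * A := by
      rw [abs_le]
      constructor <;> nlinarith [Real.exp_pos 1]
    have T1abs : |ε * a ^ (p - 2) * U / Lε * ((a - Real.exp 1 * L) / (A ^ 2 * L ^ 2))|
        = ε * a ^ (p - 2) * a * |a - Real.exp 1 * L| / (Lε * (A ^ 2 * L ^ 2)) := by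
      rw [div_mul_div_comm, abs_div, abs_mul, abs_mul, abs_mul,
        abs_of_nonneg hε0, abs_of_nonneg hP, ← ha_def,
        abs_of_nonneg (by positivity : (0:ℝ) ≤ Lε * (A ^ 2 * L ^ 2))]
    have key1 : ε * a ^ (p - 2) * a * |a - Real.exp 1 * L| / (Lε * (A ^ 2 * L ^ 2))
        ≤ (1 + Real.exp 1) * a ^ (p - 2) := by
      rw [div_le_iff₀ (by positivity)]
      have h2 : (1:ℝ) ≤ Lε * L ^ 2 := by nlinarith
      have hS : (0:ℝ) ≤ (1 + Real.exp 1) * a ^ (p - 2) * A ^ 2 := by positivity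
      calc ε * a ^ (p - 2) * a * |a - Real.exp 1 * L|
          ≤ 1 * a ^ (p - 2) * A * ((1 + Real.exp 1) * A) := by
            gcongr
        _ ≤ (1 + Real.exp 1) * a ^ (p - 2) * (Lε * (A ^ 2 * L ^ 2)) := by
            nlinarith [mul_le_mul_of_nonneg_left h2 hS]
    -- bound for second term
    have hdiv : a ^ (p - 3) * a / Lε ≤ a ^ (p - 2) := by
      rw [← hp3]
      exact div_le_self hP hLε
    have hpt1 : |p - 1 - t| = p - 1 - t := abs_of_nonneg (by linarith)
    have hpt2 : |p - t| = p - t := abs_of_nonneg (by linarith)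
    have T2abs : |a ^ (p - 3) * U / Lε * (p - 1 - t) * (p - t)|
        = a ^ (p - 3) * a / Lε * (p - 1 - t) * (p - t) := by
      rw [abs_mul, abs_mul, abs_div, abs_mul, hpt1, hpt2,
        abs_of_nonneg hP3, abs_of_nonneg hLεpos.le, ← ha_def]
    have key2 : a ^ (p - 3) * a / Lε * (p - 1 - t) * (p - t) ≤ p * (p - 1) * a ^ (p - 2) := by
      have k2a : a ^ (p - 3) * a / Lε * (p - 1 - t) ≤ a ^ (p - 2) * (p - 1) :=
        mul_le_mul hdiv (by linarith) (by linarith) hP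
      have k2b : a ^ (p - 3) * a / Lε * (p - 1 - t) * (p - t) ≤ a ^ (p - 2) * (p - 1) * p :=
        mul_le_mul k2a (by linarith) (by linarith)
          (mul_nonneg hP (by linarith))
      linarith [k2b, (by ring : a ^ (p - 2) * (p - 1) * p = p * (p - 1) * a ^ (p - 2))]
    calc |ε * a ^ (p - 2) * U / Lε * ((a - Real.exp 1 * L) / (A ^ 2 * L ^ 2)) +
          a ^ (p - 3) * U / Lε * (p - 1 - t) * (p - t)|
        ≤ |ε * a ^ (p - 2) * U / Lε * ((a - Real.exp 1 * L) / (A ^ 2 * L ^ 2))| +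
          |a ^ (p - 3) * U / Lε * (p - 1 - t) * (p - t)| := abs_add_le _ _
      _ = ε * a ^ (p - 2) * a * |a - Real.exp 1 * L| / (Lε * (A ^ 2 * L ^ 2)) +
          a ^ (p - 3) * a / Lε * (p - 1 - t) * (p - t) := by rw [T1abs, T2abs]
      _ ≤ (1 + Real.exp 1) * a ^ (p - 2) + p * (p - 1) * a ^ (p - 2) :=
          add_le_add key1 key2
      _ = ((1 + Real.exp 1) + p * (p - 1)) * a ^ (p - 2) := by ring
end

section
/- Let m ≥ 1 and M a symmetric positive definite m×m real matrix. Then F(Λ) = (1/2) Λᵀ M Λ - Σᵢ ln Λᵢ has a unique critical point Λ* in (0,∞)^m, this Λ* is the global minimum of F on (0,∞)^m, it satisfies the system (MΛ*)ᵢ = 1/Λ*ᵢ for all i, and F(Λ*) = m/2 - Σᵢ ln Λ*ᵢ. -/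
open Real Matrix

private lemma symmDot {m : ℕ} {M : Matrix (Fin m) (Fin m) ℝ} (hsymm : M.IsSymm)
    (u v : Fin m → ℝ) : u ⬝ᵥ M.mulVec v = v ⬝ᵥ M.mulVec u := by
  rw [Matrix.dotProduct_mulVec, ← Matrix.mulVec_transpose, hsymm.eq, dotProduct_comm]

private lemma keyIneq {m : ℕ} {M : Matrix (Fin m) (Fin m) ℝ} (hsymm : M.IsSymm)
    (hpos : ∀ v : Fin m → ℝ, v ≠ 0 → 0 < v ⬝ᵥ M.mulVec v)
    (L Λ : Fin m → ℝ) (hL : ∀ i, 0 < L i) (hΛ : ∀ i, 0 < Λ i)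
    (heuler : ∀ i, M.mulVec L i = 1 / L i) (hne : Λ ≠ L) :
    (1 / 2) * (L ⬝ᵥ M.mulVec L) - ∑ i, Real.log (L i) <
      (1 / 2) * (Λ ⬝ᵥ M.mulVec Λ) - ∑ i, Real.log (Λ i) := by
  set d : Fin m → ℝ := Λ - L with hd
  have hdne : d ≠ 0 := sub_ne_zero.mpr hne
  have hQd : 0 < d ⬝ᵥ M.mulVec d := hpos d hdne
  have hexp : Λ ⬝ᵥ M.mulVec Λ
      = L ⬝ᵥ M.mulVec L + 2 * (d ⬝ᵥ M.mulVec L) + d ⬝ᵥ M.mulVec d := by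
    have hΛd : Λ = L + d := by simp [hd]
    rw [hΛd, Matrix.mulVec_add, dotProduct_add, add_dotProduct,
      add_dotProduct, symmDot hsymm L d]
    ring
  have hdot : d ⬝ᵥ M.mulVec L = ∑ i, (Λ i / L i - 1) := by
    rw [dotProduct]
    apply Finset.sum_congr rfl
    intro i _
    rw [heuler i]
    have := (hL i).ne'
    simp only [hd, Pi.sub_apply]
    field_simp
  have hsum : 0 ≤ ∑ i, (Λ i / L i - 1 - Real.log (Λ i / L i)) := by
    apply Finset.sum_nonneg; intro i _
    have hx : 0 < Λ i / L i := div_pos (hΛ i) (hL i)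
    linarith [Real.log_le_sub_one_of_pos hx]
  have hexpand : ∑ i, (Λ i / L i - 1 - Real.log (Λ i / L i))
      = (∑ i, (Λ i / L i - 1)) - ((∑ i, Real.log (Λ i)) - ∑ i, Real.log (L i)) := by
    rw [Finset.sum_sub_distrib]
    congr 1
    simp only [fun i => Real.log_div (hΛ i).ne' (hL i).ne']
    rw [Finset.sum_sub_distrib]
  rw [hexpand] at hsum
  rw [hexp]
  linarith [hdot, hQd, hsum]

private lemma contQ {m : ℕ} (M : Matrix (Fin m) (Fin m) ℝ) :
    Continuous fun v : Fin m → ℝ => v ⬝ᵥ M.mulVec v := by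
  simp only [dotProduct, Matrix.mulVec]
  exact continuous_finset_sum _ fun i _ => (continuous_apply i).mul
    (continuous_finset_sum _ fun j _ => continuous_const.mul (continuous_apply j))

private lemma coercive {m : ℕ} (hm : 1 ≤ m) (M : Matrix (Fin m) (Fin m) ℝ)
    (hpos : ∀ v : Fin m → ℝ, v ≠ 0 → 0 < v ⬝ᵥ M.mulVec v) :
    ∃ c : ℝ, 0 < c ∧ ∀ v : Fin m → ℝ, c * ‖v‖ ^ 2 ≤ v ⬝ᵥ M.mulVec v := by
  haveI : Nonempty (Fin m) := ⟨⟨0, hm⟩⟩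
  have hS : (Metric.sphere (0 : Fin m → ℝ) 1).Nonempty := by
    refine ⟨fun _ => (1 : ℝ), ?_⟩
    simp [Metric.mem_sphere, dist_zero_right]
  obtain ⟨v₀, hv₀S, hmin⟩ := (isCompact_sphere (0 : Fin m → ℝ) 1).exists_isMinOn hS
    (contQ M).continuousOn
  have hv₀norm : ‖v₀‖ = 1 := by simpa using hv₀S
  have hv₀ne : v₀ ≠ 0 := by
    intro h; rw [h] at hv₀norm; simp at hv₀norm
  refine ⟨v₀ ⬝ᵥ M.mulVec v₀, hpos v₀ hv₀ne, fun v => ?_⟩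
  rcases eq_or_ne v 0 with rfl | hv
  · simp
  · have hr : 0 < ‖v‖ := norm_pos_iff.mpr hv
    set u : Fin m → ℝ := ‖v‖⁻¹ • v with hu
    have huS : u ∈ Metric.sphere (0 : Fin m → ℝ) 1 := by
      simp [hu, norm_smul, abs_of_pos (inv_pos.mpr hr), inv_mul_cancel₀ hr.ne']
    have h1 : v₀ ⬝ᵥ M.mulVec v₀ ≤ u ⬝ᵥ M.mulVec u := hmin huS
    have h2 : u ⬝ᵥ M.mulVec u = (‖v‖⁻¹) ^ 2 * (v ⬝ᵥ M.mulVec v) := by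
      simp only [hu, Matrix.mulVec_smul, smul_dotProduct, dotProduct_smul,
        smul_eq_mul]
      ring
    rw [h2] at h1
    have h4 := mul_le_mul_of_nonneg_right h1 (sq_nonneg ‖v‖)
    calc (v₀ ⬝ᵥ M.mulVec v₀) * ‖v‖ ^ 2 ≤ (‖v‖⁻¹ ^ 2 * (v ⬝ᵥ M.mulVec v)) * ‖v‖ ^ 2 := h4
      _ = v ⬝ᵥ M.mulVec v := by field_simp

theorem stmt_16 (m : ℕ) (hm : 1 ≤ m) (M : Matrix (Fin m) (Fin m) ℝ)
    (hsymm : M.IsSymm) (hpos : ∀ v : Fin m → ℝ, v ≠ 0 → 0 < v ⬝ᵥ M.mulVec v) :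
    ∃ L : Fin m → ℝ, (∀ i, 0 < L i) ∧
      (∀ i, M.mulVec L i = 1 / L i) ∧
      (∀ Λ : Fin m → ℝ, (∀ i, 0 < Λ i) → Λ ≠ L →
        (1 / 2) * (L ⬝ᵥ M.mulVec L) - ∑ i, Real.log (L i) <
          (1 / 2) * (Λ ⬝ᵥ M.mulVec Λ) - ∑ i, Real.log (Λ i)) ∧
      ((1 / 2) * (L ⬝ᵥ M.mulVec L) - ∑ i, Real.log (L i) =
        (m : ℝ) / 2 - ∑ i, Real.log (L i)) ∧
      (∀ Λ : Fin m → ℝ, (∀ i, 0 < Λ i) → (∀ i, M.mulVec Λ i = 1 / Λ i) → Λ = L) := by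
  classical
  haveI : Nonempty (Fin m) := ⟨⟨0, hm⟩⟩
  obtain ⟨c, hc, hcoer⟩ := coercive hm M hpos
  set F : (Fin m → ℝ) → ℝ :=
    fun Λ => (1 / 2) * (Λ ⬝ᵥ M.mulVec Λ) - ∑ i, Real.log (Λ i) with hF
  set One : Fin m → ℝ := fun _ => 1 with hOne
  have hQnonneg : ∀ v : Fin m → ℝ, 0 ≤ v ⬝ᵥ M.mulVec v :=
    fun v => le_trans (by positivity) (hcoer v)
  have hOne_ne : One ≠ 0 := by
    intro h
    have := congrFun h ⟨0, hm⟩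
    simp [hOne] at this
  set V : ℝ := F One with hV
  have hVeq : V = (1 / 2) * (One ⬝ᵥ M.mulVec One) := by
    simp [hV, hF, hOne]
  have hV0 : 0 < V := by
    rw [hVeq]; linarith [hpos One hOne_ne]
  set b : ℝ := max 1 (max (2 * (m + 1) / c) (V + 1)) with hb
  have hb1 : (1 : ℝ) ≤ b := le_max_left _ _
  have hb0 : (0 : ℝ) < b := lt_of_lt_of_le one_pos hb1
  have hbc : 2 * (m + 1) / c ≤ b := le_trans (le_max_left _ _) (le_max_right _ _)
  have hbV : V + 1 ≤ b := le_trans (le_max_right _ _) (le_max_right _ _)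
  have hcb : 2 * ((m : ℝ) + 1) ≤ b * c := by
    rw [div_le_iff₀ hc] at hbc; exact hbc
  have hlogb : 0 ≤ Real.log b := Real.log_nonneg hb1
  have hlogb_le : Real.log b ≤ b := by
    linarith [Real.log_le_sub_one_of_pos hb0]
  set a : ℝ := Real.exp (-(V + m * Real.log b + 1)) with ha
  have ha0 : 0 < a := Real.exp_pos _
  have hloga : Real.log a = -(V + m * Real.log b + 1) := Real.log_exp _
  have ha1 : a ≤ 1 := by
    rw [ha, Real.exp_le_one_iff]
    have : (0 : ℝ) ≤ m * Real.log b := by positivity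
    linarith
  -- the two boundary estimates
  have est_a : ∀ Λ : Fin m → ℝ, (∀ j, 0 < Λ j) → (∀ j, Λ j ≤ b) →
      (∃ i, Λ i ≤ a) → V < F Λ := by
    rintro Λ hp hub ⟨i, hia⟩
    have hsum_le : ∑ j, Real.log (Λ j) ≤ Real.log a + (m : ℝ) * Real.log b := by
      rw [← Finset.add_sum_erase _ _ (Finset.mem_univ i)]
      have h1 : Real.log (Λ i) ≤ Real.log a := Real.log_le_log (hp i) hia
      have h2 : ∑ j ∈ Finset.univ.erase i, Real.log (Λ j)
          ≤ ∑ j ∈ Finset.univ.erase i, Real.log b :=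
        Finset.sum_le_sum fun j _ => Real.log_le_log (hp j) (hub j)
      have h3 : ∑ j ∈ Finset.univ.erase i, Real.log b
          = ((Finset.univ.erase i).card : ℝ) * Real.log b := by
        rw [Finset.sum_const, nsmul_eq_mul]
      have h4 : ((Finset.univ.erase i).card : ℝ) ≤ (m : ℝ) := by
        rw [Finset.card_erase_of_mem (Finset.mem_univ i)]
        simp only [Finset.card_univ, Fintype.card_fin]
        exact_mod_cast Nat.sub_le m 1
      have h5 : ((Finset.univ.erase i).card : ℝ) * Real.log b ≤ (m : ℝ) * Real.log b :=
        mul_le_mul_of_nonneg_right h4 hlogb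
      linarith
    have hQ : 0 ≤ Λ ⬝ᵥ M.mulVec Λ := hQnonneg Λ
    have : F Λ ≥ -(Real.log a + (m : ℝ) * Real.log b) := by
      simp only [hF]; linarith
    rw [hloga] at this
    linarith
  have est_b : ∀ Λ : Fin m → ℝ, (∀ j, 0 < Λ j) → (∃ i, b ≤ Λ i) →
      (∀ j, Λ j ≤ b) → V < F Λ := by
    rintro Λ hp ⟨i, hib⟩ hub
    have hnorm : b ≤ ‖Λ‖ := by
      calc b ≤ Λ i := hib
        _ ≤ |Λ i| := le_abs_self _
        _ = ‖Λ i‖ := rfl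
        _ ≤ ‖Λ‖ := norm_le_pi_norm Λ i
    have hQ : c * b ^ 2 ≤ Λ ⬝ᵥ M.mulVec Λ := by
      calc c * b ^ 2 ≤ c * ‖Λ‖ ^ 2 := by
            apply mul_le_mul_of_nonneg_left _ hc.le
            exact pow_le_pow_left₀ hb0.le hnorm 2
        _ ≤ Λ ⬝ᵥ M.mulVec Λ := hcoer Λ
    have hS : ∑ j, Real.log (Λ j) ≤ (m : ℝ) * b := by
      have h1 : ∑ j, Real.log (Λ j) ≤ ∑ _j : Fin m, Real.log b :=
        Finset.sum_le_sum fun j _ => Real.log_le_log (hp j) (hub j)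
      have h2 : ∑ _j : Fin m, Real.log b = (m : ℝ) * Real.log b := by
        rw [Finset.sum_const, nsmul_eq_mul, Finset.card_univ, Fintype.card_fin]
      have h3 : (m : ℝ) * Real.log b ≤ (m : ℝ) * b :=
        mul_le_mul_of_nonneg_left hlogb_le (Nat.cast_nonneg m)
      linarith
    have key : 2 * ((m : ℝ) + 1) * b ≤ c * b ^ 2 := by
      nlinarith [mul_le_mul_of_nonneg_right hcb hb0.le]
    have hgoal : V < (1 / 2) * (Λ ⬝ᵥ M.mulVec Λ) - ∑ j, Real.log (Λ j) := by
      set Q' := Λ ⬝ᵥ M.mulVec Λ with hQ'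
      set S' := ∑ j, Real.log (Λ j) with hS'
      clear_value Q' S'
      clear_value a
      clear_value b
      clear_value V
      linarith [hQ, hS, key, hbV]
    simpa only [hF] using hgoal
  -- the compact box
  set K : Set (Fin m → ℝ) := Set.univ.pi fun _ => Set.Icc a b with hK
  have hKc : IsCompact K := isCompact_univ_pi fun _ => isCompact_Icc
  have hOneK : One ∈ K := by
    intro i _
    exact ⟨ha1, hb1⟩
  have hFcont : ContinuousOn F K := by
    apply ContinuousOn.sub (continuous_const.mul (contQ M)).continuousOn
    apply continuousOn_finset_sum
    intro i _
    apply Real.continuousOn_log.comp (continuous_apply i).continuousOn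
    intro Λ hΛ
    have : a ≤ Λ i := (hΛ i (Set.mem_univ i)).1
    simp only [Set.mem_compl_iff, Set.mem_singleton_iff]
    intro h
    rw [h] at this
    linarith
  obtain ⟨L, hLK, hLmin⟩ := hKc.exists_isMinOn ⟨One, hOneK⟩ hFcont
  have hLmem : ∀ i, L i ∈ Set.Icc a b := fun i => hLK i (Set.mem_univ i)
  have hLpos : ∀ i, 0 < L i := fun i => lt_of_lt_of_le ha0 (hLmem i).1
  have hLub : ∀ i, L i ≤ b := fun i => (hLmem i).2
  have hFLV : F L ≤ V := hLmin hOneK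
  have hLa : ∀ i, a < L i := by
    intro i
    rcases lt_or_ge a (L i) with h | h
    · exact h
    · exact absurd hFLV (not_le.mpr (est_a L hLpos hLub ⟨i, h⟩))
  have hLb : ∀ i, L i < b := by
    intro i
    rcases lt_or_ge (L i) b with h | h
    · exact h
    · exact absurd hFLV (not_le.mpr (est_b L hLpos ⟨i, h⟩ hLub))
  -- Euler equations
  have heuler : ∀ i, M.mulVec L i = 1 / L i := by
    intro i
    set e : Fin m → ℝ := Pi.single i 1 with he
    set A : ℝ := M.mulVec L i with hA
    set g : ℝ → ℝ := fun t =>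
      (1 / 2) * ((L ⬝ᵥ M.mulVec L) + 2 * A * t + M i i * t ^ 2)
        - (Real.log (L i + t) + ∑ j ∈ Finset.univ.erase i, Real.log (L j)) with hg
    have hFeq : ∀ t : ℝ, F (L + t • e) = g t := by
      intro t
      have hvec : L + t • e = Function.update L i (L i + t) := by
        funext j
        by_cases hji : j = i
        · subst hji
          simp [he]
        · simp [he, Pi.single_eq_of_ne hji, Function.update_of_ne hji]
      have hQ : (L + t • e) ⬝ᵥ M.mulVec (L + t • e)
          = (L ⬝ᵥ M.mulVec L) + 2 * A * t + M i i * t ^ 2 := by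
        rw [Matrix.mulVec_add, Matrix.mulVec_smul, dotProduct_add,
          add_dotProduct, add_dotProduct, dotProduct_smul,
          dotProduct_smul, smul_dotProduct, smul_dotProduct,
          symmDot hsymm L e]
        simp only [he, hA, single_dotProduct, Matrix.mulVec_single_one, Matrix.col_apply, smul_eq_mul,
          one_mul, mul_one]
        ring
      have hsum : ∑ j, Real.log ((L + t • e) j)
          = Real.log (L i + t) + ∑ j ∈ Finset.univ.erase i, Real.log (L j) := by
        rw [hvec, ← Finset.add_sum_erase _ _ (Finset.mem_univ i)]
        congr 1
        · rw [Function.update_self]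
        · apply Finset.sum_congr rfl
          intro j hj
          rw [Function.update_of_ne (Finset.ne_of_mem_erase hj)]
      simp only [hF, hg, hQ, hsum]
    have hδ : 0 < min (L i - a) (b - L i) :=
      lt_min (by linarith [hLa i]) (by linarith [hLb i])
    have hloc : IsLocalMin g 0 := by
      have hloc' : IsLocalMin (fun t : ℝ => F (L + t • e)) (0 : ℝ) := by
        rw [IsLocalMin, IsMinFilter]
        filter_upwards [Metric.ball_mem_nhds (0 : ℝ) hδ] with t ht
        have ht' : |t| < min (L i - a) (b - L i) := by
          simpa [Real.dist_eq] using ht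
        have hmm := abs_lt.mp ht'
        have hm1 := min_le_left (L i - a) (b - L i)
        have hm2 := min_le_right (L i - a) (b - L i)
        have hmem : (L + t • e) ∈ K := by
          intro j _
          by_cases hji : j = i
          · subst hji
            have h1 : (L + t • e) j = L j + t := by simp [he]
            rw [h1]
            exact ⟨by linarith [hmm.1], by linarith [hmm.2]⟩
          · have h1 : (L + t • e) j = L j := by simp [he, Pi.single_eq_of_ne hji]
            rw [h1]
            exact hLmem j
        have h0 : F (L + (0 : ℝ) • e) = F L := by simp
        calc F (L + (0 : ℝ) • e) = F L := h0
          _ ≤ F (L + t • e) := hLmin hmem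
      have hgf : g = fun t : ℝ => F (L + t • e) := funext fun t => (hFeq t).symm
      rw [hgf]
      exact hloc'
    have hLine : L i + (0 : ℝ) ≠ 0 := by
      simpa using (hLpos i).ne'
    have hder : HasDerivAt g (A - 1 / L i) 0 := by
      have h1 : HasDerivAt (fun t : ℝ => (L ⬝ᵥ M.mulVec L) + 2 * A * t + M i i * t ^ 2)
          (2 * A + M i i * (2 * 0)) 0 := by
        have ha' : HasDerivAt (fun t : ℝ => 2 * A * t) (2 * A) 0 := by
          simpa using (hasDerivAt_id (0 : ℝ)).const_mul (2 * A)
        have hb' : HasDerivAt (fun t : ℝ => M i i * t ^ 2) (M i i * (2 * 0)) 0 := by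
          have := (hasDerivAt_pow 2 (0 : ℝ)).const_mul (M i i)
          simpa using this
        exact ((ha'.const_add _).add hb')
      have h2 : HasDerivAt (fun t : ℝ => Real.log (L i + t)) (1 / (L i + 0)) 0 := by
        have h0 : HasDerivAt (fun t : ℝ => L i + t) 1 0 := (hasDerivAt_id 0).const_add (L i)
        exact h0.log hLine
      have h3 : HasDerivAt (fun t : ℝ =>
          Real.log (L i + t) + ∑ j ∈ Finset.univ.erase i, Real.log (L j))
          (1 / (L i + 0)) 0 := h2.add_const _
      have h4 := (h1.const_mul (1 / 2 : ℝ)).sub h3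
      refine h4.congr_deriv ?_
      simp
    have hzero := hloc.hasDerivAt_eq_zero hder
    have : A = 1 / L i := by linarith [hzero]
    exact this
  -- assemble
  refine ⟨L, hLpos, heuler, ?_, ?_, ?_⟩
  · exact fun Λ hΛ hne => keyIneq hsymm hpos L Λ hLpos hΛ heuler hne
  · have hQm : L ⬝ᵥ M.mulVec L = (m : ℝ) := by
      rw [dotProduct]
      have : ∀ i ∈ Finset.univ, L i * M.mulVec L i = 1 := by
        intro i _
        rw [heuler i, mul_one_div, div_self (hLpos i).ne']
      rw [Finset.sum_congr rfl this]
      simp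
    rw [hQm]
    ring
  · intro Λ hΛpos hΛeuler
    by_contra hne
    have h1 := keyIneq hsymm hpos L Λ hLpos hΛpos heuler hne
    have h2 := keyIneq hsymm hpos Λ L hΛpos hLpos hΛeuler (Ne.symm hne)
    linarith
end
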